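/- Let λ₁, λ₂, λ₃ > 0, θ > 0, c₁, c₂, c₃ > 0, u* ∈ ℝ, and write φᵢ = φ_{λᵢ} where φ_λ(x) = λ(e^x − 1). Let η₁, η₂, η₃ : [0,∞) → ℝ be differentiable and set z₁ = η₃ − η₂, z₂ = η₁ − z₁. Assume φ₁(z₂(t)) ≠ 0 for all t and that the closed-loop system η₁′ = u* − u − φ₂(η₂), η₂′ = −φ₃(η₃), η₃′ = −φ₁(η₁) holds, where the control is u = u* + (1/φ₁(z₂))·(c₃·φ₁(z₂)² + θc₁·φ₂(η₂)² + θc₂·φ₃(z₁)²) + ((φ₁(z₂) − θφ₃(z₁))/φ₁(z₂))·φ₁(η₁) − φ₂(η₂) + ((θφ₃(z₁) − φ₁(z₂) − θφ₂(η₂))/φ₁(z₂))·φ₃(η₃). Then, with V₃(η₂, z₁, z₂) = θλ₂ω̃(η₂) + θλ₃ω̃(z₁) + λ₁ω̃(z₂) and ω̃(x) = e^x − 1 − x, one has for every t: d/dt [V₃(η₂(t), z₁(t), z₂(t))] = −θc₁·φ₂(η₂(t))² − θc₂·φ₃(z₁(t))² − c₃·φ₁(z₂(t))². -/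

import Mathlib

/-- `φ_λ(x) = λ(e^x − 1)`. -/
noncomputable def phiL (l x : ℝ) : ℝ := l * (Real.exp x - 1)

/-- `ω̃(x) = e^x − 1 − x`. -/
noncomputable def omegaTilde (x : ℝ) : ℝ := Real.exp x - 1 - x

lemma omegaTilde_hasDerivAt (x : ℝ) : HasDerivAt omegaTilde (Real.exp x - 1) x := by
  have h := ((Real.hasDerivAt_exp x).sub_const 1).sub (hasDerivAt_id x)
  exact h

/-- Lyapunov dissipation identity of Theorem 3.3 (three-species non-transitive
competition, `ψᵢ ≡ 0`): along the closed loop with the backstepping control `u`,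
`d/dt V₃(η₂, z₁, z₂) = −θc₁φ₂(η₂)² − θc₂φ₃(z₁)² − c₃φ₁(z₂)²`. -/
theorem stmt2 (l1 l2 l3 θ c1 c2 c3 ustar : ℝ)
    (hl1 : 0 < l1) (hl2 : 0 < l2) (hl3 : 0 < l3) (hθ : 0 < θ)
    (hc1 : 0 < c1) (hc2 : 0 < c2) (hc3 : 0 < c3)
    (η1 η2 η3 z1 z2 u : ℝ → ℝ)
    (hz1 : ∀ t, z1 t = η3 t - η2 t)
    (hz2 : ∀ t, z2 t = η1 t - z1 t)
    (hne : ∀ t, 0 ≤ t → phiL l1 (z2 t) ≠ 0)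
    (hu : ∀ t, u t = ustar
      + (1 / phiL l1 (z2 t)) *
          (c3 * (phiL l1 (z2 t))^2 + θ * c1 * (phiL l2 (η2 t))^2
            + θ * c2 * (phiL l3 (z1 t))^2)
      + ((phiL l1 (z2 t) - θ * phiL l3 (z1 t)) / phiL l1 (z2 t)) * phiL l1 (η1 t)
      - phiL l2 (η2 t)
      + ((θ * phiL l3 (z1 t) - phiL l1 (z2 t) - θ * phiL l2 (η2 t)) / phiL l1 (z2 t))
          * phiL l3 (η3 t))
    (hd1 : ∀ t, 0 ≤ t →
      HasDerivWithinAt η1 (ustar - u t - phiL l2 (η2 t)) (Set.Ici 0) t)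
    (hd2 : ∀ t, 0 ≤ t →
      HasDerivWithinAt η2 (-(phiL l3 (η3 t))) (Set.Ici 0) t)
    (hd3 : ∀ t, 0 ≤ t →
      HasDerivWithinAt η3 (-(phiL l1 (η1 t))) (Set.Ici 0) t) :
    ∀ t, 0 ≤ t → HasDerivWithinAt
      (fun s => θ * l2 * omegaTilde (η2 s) + θ * l3 * omegaTilde (z1 s)
        + l1 * omegaTilde (z2 s))
      (-(θ * c1 * (phiL l2 (η2 t))^2) - θ * c2 * (phiL l3 (z1 t))^2
        - c3 * (phiL l1 (z2 t))^2)
      (Set.Ici 0) t := by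
  intro t ht
  have hz1f : z1 = fun s => η3 s - η2 s := funext hz1
  have hz2f : z2 = fun s => η1 s - (η3 s - η2 s) := by
    funext s; rw [hz2 s, hz1 s]
  have hdz1 : HasDerivWithinAt z1
      (-(phiL l1 (η1 t)) - (-(phiL l3 (η3 t)))) (Set.Ici 0) t := by
    rw [hz1f]; exact (hd3 t ht).sub (hd2 t ht)
  have hdz2 : HasDerivWithinAt z2
      ((ustar - u t - phiL l2 (η2 t)) - (-(phiL l1 (η1 t)) - (-(phiL l3 (η3 t)))))
      (Set.Ici 0) t := by
    rw [hz2f]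
    exact (hd1 t ht).sub ((hd3 t ht).sub (hd2 t ht))
  have h2 : HasDerivWithinAt (fun s => omegaTilde (η2 s))
      ((Real.exp (η2 t) - 1) * (-(phiL l3 (η3 t)))) (Set.Ici 0) t :=
    (omegaTilde_hasDerivAt (η2 t)).comp_hasDerivWithinAt t (hd2 t ht)
  have h3 : HasDerivWithinAt (fun s => omegaTilde (z1 s))
      ((Real.exp (z1 t) - 1) * ((-(phiL l1 (η1 t)) - (-(phiL l3 (η3 t)))))) (Set.Ici 0) t :=
    (omegaTilde_hasDerivAt (z1 t)).comp_hasDerivWithinAt t hdz1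
  have h4 : HasDerivWithinAt (fun s => omegaTilde (z2 s))
      ((Real.exp (z2 t) - 1) *
        ((ustar - u t - phiL l2 (η2 t)) - (-(phiL l1 (η1 t)) - (-(phiL l3 (η3 t))))))
      (Set.Ici 0) t :=
    (omegaTilde_hasDerivAt (z2 t)).comp_hasDerivWithinAt t hdz2
  have H := ((h2.const_mul (θ * l2)).add (h3.const_mul (θ * l3))).add
    (h4.const_mul l1)
  convert H using 1
  · rfl
  · rfl
  · rfl
  have hne' := hne t ht
  rw [hu t]
  simp only [phiL] at *
  have he2 : l2 * (Real.exp (η2 t) - 1) = phiL l2 (η2 t) := rfl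
  have hl1' : l1 ≠ 0 := hl1.ne'
  have hez : Real.exp (z2 t) - 1 ≠ 0 := right_ne_zero_of_mul hne'
  field_simp
  ring
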